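/- Fix an integer n ≥ 1, masses m_1, …, m_n > 0 and radii s_1, …, s_n > 0, and set E_min = −∑_{i=1}^n m_i/s_i. Let z : ℝ → ℝ be a twice differentiable solution of z''(t) = −∑_{i=1}^n m_i z(t)/(s_i² + z(t)²)^{3/2} whose energy E = z'(0)²/2 − ∑_{i=1}^n m_i (s_i² + z(0)²)^{-1/2} satisfies E_min < E < 0. Then z is periodic: there exists T > 0 such that z(t + T) = z(t) for all t ∈ ℝ. -/

import Mathlib

open Set Filter

/-- The Sitnikov force field (right-hand side of the ODE). -/
private noncomputable def sitF (n : ℕ) (m s : Fin n → ℝ) (x : ℝ) : ℝ :=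
  -∑ i, m i * x / (s i ^ 2 + x ^ 2) ^ ((3 : ℝ) / 2)

private lemma hasDerivAt_base (si x : ℝ) :
    HasDerivAt (fun x : ℝ => si ^ 2 + x ^ 2) (2 * x) x := by
  simpa using ((hasDerivAt_pow 2 x).const_add (si ^ 2))

private lemma hasDerivAt_rpow_base (si x c : ℝ) (hsi : 0 < si) :
    HasDerivAt (fun x : ℝ => (si ^ 2 + x ^ 2) ^ c)
      (c * (si ^ 2 + x ^ 2) ^ (c - 1) * (2 * x)) x := by
  have hpos : (0 : ℝ) < si ^ 2 + x ^ 2 := by positivity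
  have h := (Real.hasDerivAt_rpow_const (x := si ^ 2 + x ^ 2) (p := c)
    (Or.inl hpos.ne')).comp x (hasDerivAt_base si x)
  exact h

private lemma hasDerivAt_term (mi si : ℝ) (hsi : 0 < si) (x : ℝ) :
    HasDerivAt (fun x : ℝ => mi * x / (si ^ 2 + x ^ 2) ^ ((3 : ℝ) / 2))
      (mi * ((si ^ 2 + x ^ 2) ^ (-((3 : ℝ) / 2))
        - 3 * x ^ 2 * (si ^ 2 + x ^ 2) ^ (-((5 : ℝ) / 2)))) x := by
  have hpos : ∀ y : ℝ, (0 : ℝ) < si ^ 2 + y ^ 2 := fun y => by positivity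
  have heq : (fun x : ℝ => mi * x / (si ^ 2 + x ^ 2) ^ ((3 : ℝ) / 2))
      = fun x : ℝ => mi * x * (si ^ 2 + x ^ 2) ^ (-((3 : ℝ) / 2)) := by
    funext y
    rw [Real.rpow_neg (hpos y).le, div_eq_mul_inv]
  rw [heq]
  have h1 : HasDerivAt (fun x : ℝ => mi * x) mi x := by
    simpa using (hasDerivAt_id x).const_mul mi
  have h3 := h1.mul (hasDerivAt_rpow_base si x (-((3 : ℝ) / 2)) hsi)
  refine h3.congr_deriv ?_
  rw [show -((3 : ℝ) / 2) - 1 = -((5 : ℝ) / 2) by norm_num]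
  ring
private lemma rpow_sq_neg_eq (si : ℝ) (hsi : 0 < si) (c : ℕ) :
    ((si ^ 2 : ℝ)) ^ (-((c : ℝ) / 2)) = (si ^ c)⁻¹ := by
  rw [show ((si ^ 2 : ℝ)) = si ^ (2 : ℕ) from rfl, ← Real.rpow_natCast si 2,
    ← Real.rpow_mul hsi.le]
  rw [show ((2 : ℕ) : ℝ) * -((c : ℝ) / 2) = -(c : ℝ) by push_cast; ring,
    Real.rpow_neg hsi.le, Real.rpow_natCast]

private lemma term_deriv_bound (mi si x : ℝ) (hmi : 0 < mi) (hsi : 0 < si) :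
    |mi * ((si ^ 2 + x ^ 2) ^ (-((3 : ℝ) / 2))
      - 3 * x ^ 2 * (si ^ 2 + x ^ 2) ^ (-((5 : ℝ) / 2)))| ≤ 4 * mi / si ^ 3 := by
  have hP : (0 : ℝ) < si ^ 2 + x ^ 2 := by positivity
  set P : ℝ := si ^ 2 + x ^ 2 with hPdef
  have ha : (0 : ℝ) < P ^ (-((3 : ℝ) / 2)) := Real.rpow_pos_of_pos hP _
  have hb : (0 : ℝ) ≤ 3 * x ^ 2 * P ^ (-((5 : ℝ) / 2)) := by positivity
  have hkey : P * P ^ (-((5 : ℝ) / 2)) = P ^ (-((3 : ℝ) / 2)) := by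
    rw [show P * P ^ (-((5 : ℝ) / 2)) = P ^ (1 : ℝ) * P ^ (-((5 : ℝ) / 2)) by
      rw [Real.rpow_one], ← Real.rpow_add hP]
    norm_num
  have hba : 3 * x ^ 2 * P ^ (-((5 : ℝ) / 2)) ≤ 3 * P ^ (-((3 : ℝ) / 2)) := by
    have hx2 : x ^ 2 ≤ P := by rw [hPdef]; nlinarith [sq_nonneg si]
    have := mul_le_mul_of_nonneg_right hx2 (Real.rpow_pos_of_pos hP (-((5 : ℝ) / 2))).le
    calc 3 * x ^ 2 * P ^ (-((5 : ℝ) / 2)) = 3 * (x ^ 2 * P ^ (-((5 : ℝ) / 2))) := by ring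
      _ ≤ 3 * (P * P ^ (-((5 : ℝ) / 2))) := by linarith
      _ = 3 * P ^ (-((3 : ℝ) / 2)) := by rw [hkey]
  have hsi2 : (0 : ℝ) < si ^ 2 := by positivity
  have haP : P ^ (-((3 : ℝ) / 2)) ≤ (si ^ 3)⁻¹ := by
    have h1 : P ^ (-((3 : ℝ) / 2)) ≤ ((si ^ 2 : ℝ)) ^ (-((3 : ℝ) / 2)) := by
      apply Real.rpow_le_rpow_of_nonpos hsi2 (by rw [hPdef]; nlinarith [sq_nonneg x])
      norm_num
    calc P ^ (-((3 : ℝ) / 2)) ≤ ((si ^ 2 : ℝ)) ^ (-((3 : ℝ) / 2)) := h1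
      _ = (si ^ 3)⁻¹ := by simpa using rpow_sq_neg_eq si hsi 3
  have habs : |P ^ (-((3 : ℝ) / 2)) - 3 * x ^ 2 * P ^ (-((5 : ℝ) / 2))|
      ≤ P ^ (-((3 : ℝ) / 2)) + 3 * x ^ 2 * P ^ (-((5 : ℝ) / 2)) := by
    rw [abs_sub_comm]
    calc |3 * x ^ 2 * P ^ (-((5 : ℝ) / 2)) - P ^ (-((3 : ℝ) / 2))|
        ≤ |3 * x ^ 2 * P ^ (-((5 : ℝ) / 2))| + |P ^ (-((3 : ℝ) / 2))| := abs_sub _ _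
      _ = 3 * x ^ 2 * P ^ (-((5 : ℝ) / 2)) + P ^ (-((3 : ℝ) / 2)) := by
          rw [abs_of_nonneg hb, abs_of_pos ha]
      _ = P ^ (-((3 : ℝ) / 2)) + 3 * x ^ 2 * P ^ (-((5 : ℝ) / 2)) := by ring
  rw [abs_mul, abs_of_pos hmi, div_eq_mul_inv (4 * mi) (si ^ 3)]
  have hsi3 : (0 : ℝ) < (si ^ 3)⁻¹ := by positivity
  nlinarith [mul_le_mul_of_nonneg_left habs hmi.le, mul_le_mul_of_nonneg_left hba hmi.le,
    mul_le_mul_of_nonneg_left haP hmi.le]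
private lemma hasDerivAt_sitF (n : ℕ) (m s : Fin n → ℝ) (hs : ∀ i, 0 < s i) (x : ℝ) :
    HasDerivAt (sitF n m s)
      (-∑ i, m i * ((s i ^ 2 + x ^ 2) ^ (-((3 : ℝ) / 2))
        - 3 * x ^ 2 * (s i ^ 2 + x ^ 2) ^ (-((5 : ℝ) / 2)))) x := by
  have h := (HasDerivAt.fun_sum (u := Finset.univ)
    (A := fun i => fun x : ℝ => m i * x / (s i ^ 2 + x ^ 2) ^ ((3 : ℝ) / 2))
    (A' := fun i => m i * ((s i ^ 2 + x ^ 2) ^ (-((3 : ℝ) / 2))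
      - 3 * x ^ 2 * (s i ^ 2 + x ^ 2) ^ (-((5 : ℝ) / 2))))
    (fun i _ => hasDerivAt_term (m i) (s i) (hs i) x)).neg
  exact h

private lemma sitF_lipschitz (n : ℕ) (m s : Fin n → ℝ) (hm : ∀ i, 0 < m i)
    (hs : ∀ i, 0 < s i) :
    ∃ K : NNReal, LipschitzWith K (sitF n m s) := by
  have hL0 : (0 : ℝ) ≤ ∑ i, 4 * m i / s i ^ 3 :=
    Finset.sum_nonneg fun i _ => le_of_lt (div_pos (by linarith [hm i]) (pow_pos (hs i) 3))
  refine ⟨⟨∑ i, 4 * m i / s i ^ 3, hL0⟩, ?_⟩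
  apply lipschitzWith_of_nnnorm_deriv_le
    (fun x => (hasDerivAt_sitF n m s hs x).differentiableAt)
  intro x
  refine NNReal.coe_le_coe.mp ?_
  rw [coe_nnnorm, Real.norm_eq_abs, (hasDerivAt_sitF n m s hs x).deriv]
  show |-∑ i, m i * ((s i ^ 2 + x ^ 2) ^ (-((3 : ℝ) / 2))
    - 3 * x ^ 2 * (s i ^ 2 + x ^ 2) ^ (-((5 : ℝ) / 2)))| ≤ ∑ i, 4 * m i / s i ^ 3
  rw [abs_neg]
  calc |∑ i, m i * ((s i ^ 2 + x ^ 2) ^ (-((3 : ℝ) / 2))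
      - 3 * x ^ 2 * (s i ^ 2 + x ^ 2) ^ (-((5 : ℝ) / 2)))|
      ≤ ∑ i, |m i * ((s i ^ 2 + x ^ 2) ^ (-((3 : ℝ) / 2))
        - 3 * x ^ 2 * (s i ^ 2 + x ^ 2) ^ (-((5 : ℝ) / 2)))| :=
        Finset.abs_sum_le_sum_abs _ _
    _ ≤ ∑ i, 4 * m i / s i ^ 3 :=
        Finset.sum_le_sum fun i _ => term_deriv_bound (m i) (s i) x (hm i) (hs i)
private lemma sitnikov_reflect (n : ℕ) (m s : Fin n → ℝ) (hm : ∀ i, 0 < m i)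
    (hs : ∀ i, 0 < s i) (z : ℝ → ℝ) (hz : Differentiable ℝ z)
    (hz' : Differentiable ℝ (deriv z))
    (hode : ∀ t, deriv (deriv z) t = sitF n m s (z t))
    (c : ℝ) (hc : deriv z c = 0) : ∀ u : ℝ, z (c + u) = z (c - u) := by
  obtain ⟨K, hK⟩ := sitF_lipschitz n m s hm hs
  set vf : ℝ × ℝ → ℝ × ℝ := fun p => (p.2, sitF n m s p.1) with hvfdef
  have hvf : LipschitzWith (max 1 (K * 1)) vf :=
    LipschitzWith.prodMk LipschitzWith.prod_snd (hK.comp LipschitzWith.prod_fst)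
  set f : ℝ → ℝ × ℝ := fun t => (z (c + t), deriv z (c + t)) with hfdef
  set g : ℝ → ℝ × ℝ := fun t => (z (c - t), -deriv z (c - t)) with hgdef
  have hf' : ∀ t : ℝ, HasDerivAt f (vf (f t)) t := by
    intro t
    have h1 : HasDerivAt (fun t => z (c + t)) (deriv z (c + t)) t := by
      exact ((hz (c + t)).hasDerivAt.comp t ((hasDerivAt_id t).const_add c)).congr_deriv (by ring)
    have h2 : HasDerivAt (fun t => deriv z (c + t)) (deriv (deriv z) (c + t)) t := by
      exact ((hz' (c + t)).hasDerivAt.comp t ((hasDerivAt_id t).const_add c)).congr_deriv (by ring)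
    have := h1.prodMk h2
    rw [hode (c + t)] at this
    exact this
  have hg' : ∀ t : ℝ, HasDerivAt g (vf (g t)) t := by
    intro t
    have h1 : HasDerivAt (fun t => z (c - t)) (-deriv z (c - t)) t := by
      have := (hz (c - t)).hasDerivAt.comp t ((hasDerivAt_id t).const_sub c)
      exact this.congr_deriv (by ring)
    have h2 : HasDerivAt (fun t => -deriv z (c - t)) (deriv (deriv z) (c - t)) t := by
      have := ((hz' (c - t)).hasDerivAt.comp t ((hasDerivAt_id t).const_sub c)).neg
      exact this.congr_deriv (by ring)
    have := h1.prodMk h2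
    rw [hode (c - t)] at this
    exact this
  have h0 : f 0 = g 0 := by
    simp [hfdef, hgdef, hc]
  suffices h : ∀ u : ℝ, 0 ≤ u → z (c + u) = z (c - u) by
    intro u
    rcases le_or_gt 0 u with h' | h'
    · exact h u h'
    · have h2 := h (-u) (by linarith)
      rw [show c + -u = c - u by ring, show c - -u = c + u by ring] at h2
      exact h2.symm
  intro u hu
  have hcf : ContinuousOn f (Icc 0 u) :=
    (Continuous.continuousOn (by
      exact ((hz.continuous.comp (continuous_const.add continuous_id)).prodMk
        (hz'.continuous.comp (continuous_const.add continuous_id)))))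
  have hcg : ContinuousOn g (Icc 0 u) :=
    (Continuous.continuousOn (by
      exact ((hz.continuous.comp (continuous_const.sub continuous_id)).prodMk
        ((hz'.continuous.comp (continuous_const.sub continuous_id)).neg))))
  have heq := ODE_solution_unique (v := fun _ : ℝ => vf) (fun _ => hvf) hcf
    (fun t _ => (hf' t).hasDerivWithinAt) hcg (fun t _ => (hg' t).hasDerivWithinAt) h0
    (right_mem_Icc.mpr hu)
  exact congrArg Prod.fst heq
private lemma linear_lower (f : ℝ → ℝ) (hf : Differentiable ℝ f) (a c : ℝ)
    (h : ∀ t ∈ Ioi a, c ≤ deriv f t) : ∀ t, a ≤ t → f a + c * (t - a) ≤ f t := by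
  intro t ht
  have hderiv : ∀ x : ℝ, HasDerivAt (fun t => f t - c * t) (deriv f x - c) x := by
    intro x
    exact ((hf x).hasDerivAt.sub ((hasDerivAt_id x).const_mul c)).congr_deriv (by ring)
  have hmono : MonotoneOn (fun t => f t - c * t) (Ici a) := by
    apply monotoneOn_of_deriv_nonneg (convex_Ici a)
    · exact (Continuous.continuousOn (hf.continuous.sub (continuous_const.mul continuous_id)))
    · exact fun x _ => (hderiv x).differentiableAt.differentiableWithinAt
    · intro x hx
      rw [interior_Ici] at hx
      rw [(hderiv x).deriv]
      linarith [h x hx]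
  have := hmono self_mem_Ici (mem_Ici.mpr ht) ht
  simp only at this
  linarith

private lemma linear_upper (f : ℝ → ℝ) (hf : Differentiable ℝ f) (a c : ℝ)
    (h : ∀ t ∈ Ioi a, deriv f t ≤ c) : ∀ t, a ≤ t → f t ≤ f a + c * (t - a) := by
  intro t ht
  have hneg : ∀ x ∈ Ioi a, -c ≤ deriv (fun y => -f y) x := by
    intro x hx
    rw [deriv.fun_neg]
    linarith [h x hx]
  have := linear_lower (fun y => -f y) hf.neg a (-c) hneg t ht
  linarith

private lemma no_eventually_pos (n : ℕ) (hn : 1 ≤ n) (m s : Fin n → ℝ)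
    (hm : ∀ i, 0 < m i) (hs : ∀ i, 0 < s i)
    (z : ℝ → ℝ) (hz : Differentiable ℝ z) (hz' : Differentiable ℝ (deriv z))
    (hode : ∀ t, deriv (deriv z) t = sitF n m s (z t))
    (B : ℝ) (hB : ∀ t, z t ≤ B)
    (a : ℝ) (hpos : ∀ t ∈ Ioi a, 0 < deriv z t) : False := by
  have hc : 0 < deriv z (a + 1) := hpos _ (by simp [mem_Ioi])
  -- Step 1: z must become positive somewhere past `a`.
  have hcross : ∃ t₂, a < t₂ ∧ 0 < z t₂ := by
    by_contra hcon
    push_neg at hcon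
    -- z'' ≥ 0 on Ioi a
    have hsecond : ∀ t ∈ Ioi a, (0 : ℝ) ≤ deriv (deriv z) t := by
      intro t ht
      rw [hode t]
      have : ∑ i, m i * z t / (s i ^ 2 + (z t) ^ 2) ^ ((3 : ℝ) / 2) ≤ 0 := by
        apply Finset.sum_nonpos
        intro i _
        apply div_nonpos_of_nonpos_of_nonneg
        · exact mul_nonpos_of_nonneg_of_nonpos (hm i).le (hcon t ht)
        · exact (Real.rpow_pos_of_pos (by nlinarith [pow_pos (hs i) 2, sq_nonneg (z t)]) _).le
      simpa [sitF] using neg_nonneg.mpr this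
    have hd1 : ∀ t, a + 1 ≤ t → deriv z (a + 1) ≤ deriv z t := by
      intro t ht
      have := linear_lower (deriv z) hz' (a + 1) 0
        (fun x hx => hsecond x (by simp only [mem_Ioi] at hx ⊢; linarith)) t ht
      linarith
    have hd2 := linear_lower z hz (a + 1) (deriv z (a + 1))
      (fun x hx => hd1 x (le_of_lt hx)) 
    set c := deriv z (a + 1) with hcd
    set T := a + 1 + (1 - z (a + 1)) / c with hT
    have hzT : z (a + 1) ≤ 0 := hcon _ (by linarith)
    have hTge : a + 1 ≤ T := by
      rw [hT]
      have : (0 : ℝ) ≤ (1 - z (a + 1)) / c := div_nonneg (by linarith) hc.le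
      linarith
    have hstep := hd2 T hTge
    have harg : c * (T - (a + 1)) = 1 - z (a + 1) := by
      rw [hT, show a + 1 + (1 - z (a + 1)) / c - (a + 1) = (1 - z (a + 1)) / c by ring,
        mul_comm, div_mul_cancel₀ _ hc.ne']
    have hzT2 : z T ≤ 0 := hcon T (by linarith)
    rw [harg] at hstep
    linarith
  obtain ⟨t₂, ht₂a, ht₂pos⟩ := hcross
  -- z is ≥ z t₂ after t₂
  have hmono : ∀ t, t₂ ≤ t → z t₂ ≤ z t := by
    intro t ht
    have := linear_lower z hz t₂ 0
      (fun x hx => (hpos x (mem_Ioi.mpr (lt_trans ht₂a (mem_Ioi.mp hx)))).le) t ht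
    linarith
  -- minimum of the attracting force on [z t₂, B]
  have hGcont : Continuous (fun x : ℝ => ∑ i, m i * x / (s i ^ 2 + x ^ 2) ^ ((3 : ℝ) / 2)) := by
    apply continuous_finset_sum
    intro i _
    apply Continuous.div (continuous_const.mul continuous_id)
    · exact Continuous.rpow_const (by continuity) (fun x => Or.inr (by norm_num))
    · exact fun x => (Real.rpow_pos_of_pos (by nlinarith [pow_pos (hs i) 2, sq_nonneg x]) _).ne'
  have hzB : z t₂ ≤ B := hB t₂
  obtain ⟨x₀, hx₀mem, hx₀min⟩ := isCompact_Icc.exists_isMinOn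
    (nonempty_Icc.mpr hzB) hGcont.continuousOn
  set δ := ∑ i, m i * x₀ / (s i ^ 2 + x₀ ^ 2) ^ ((3 : ℝ) / 2) with hδdef
  have hx₀pos : 0 < x₀ := lt_of_lt_of_le ht₂pos hx₀mem.1
  have hδpos : 0 < δ := by
    rw [hδdef]
    apply Finset.sum_pos
    · intro i _
      exact div_pos (mul_pos (hm i) hx₀pos)
        (Real.rpow_pos_of_pos (by nlinarith [pow_pos (hs i) 2, sq_nonneg x₀]) _)
    · exact ⟨⟨0, hn⟩, Finset.mem_univ _⟩
  have hupper : ∀ t ∈ Ioi t₂, deriv (deriv z) t ≤ -δ := by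
    intro t ht
    rw [hode t]
    have hmem : z t ∈ Icc (z t₂) B := ⟨hmono t (le_of_lt (mem_Ioi.mp ht)), hB t⟩
    have hmin := isMinOn_iff.mp hx₀min (z t) hmem
    simp only [hδdef, sitF]
    linarith [hmin]
  have hlin := linear_upper (deriv z) hz' t₂ (-δ) hupper
  set T := t₂ + deriv z t₂ / δ + 1 with hT
  have hTge : t₂ ≤ T := by
    rw [hT]
    have h0 : 0 < deriv z t₂ := hpos t₂ (mem_Ioi.mpr ht₂a)
    have : (0 : ℝ) ≤ deriv z t₂ / δ := div_nonneg h0.le hδpos.le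
    linarith
  have h1 := hlin T hTge
  have h2 : 0 < deriv z T := hpos T (mem_Ioi.mpr (lt_of_lt_of_le ht₂a hTge))
  rw [hT] at h1
  rw [show t₂ + deriv z t₂ / δ + 1 - t₂ = deriv z t₂ / δ + 1 by ring] at h1
  have h3 : -δ * (deriv z t₂ / δ + 1) = -(deriv z t₂) - δ := by
    field_simp
    ring
  rw [h3] at h1
  rw [← hT] at h1
  linarith
private lemma sitF_odd (n : ℕ) (m s : Fin n → ℝ) (x : ℝ) :
    sitF n m s (-x) = -sitF n m s x := by
  simp only [sitF, neg_neg]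
  rw [← Finset.sum_neg_distrib]
  apply Finset.sum_congr rfl
  intro i _
  rw [neg_sq]
  ring

private lemma exists_deriv_zero (n : ℕ) (hn : 1 ≤ n) (m s : Fin n → ℝ)
    (hm : ∀ i, 0 < m i) (hs : ∀ i, 0 < s i)
    (z : ℝ → ℝ) (hz : Differentiable ℝ z) (hz' : Differentiable ℝ (deriv z))
    (hode : ∀ t, deriv (deriv z) t = sitF n m s (z t))
    (B : ℝ) (hB : ∀ t, |z t| ≤ B) :
    ∀ a : ℝ, ∃ c, a < c ∧ deriv z c = 0 := by
  intro a
  by_contra hcon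
  push_neg at hcon
  have hdichot : (∀ t ∈ Ioi a, 0 < deriv z t) ∨ (∀ t ∈ Ioi a, deriv z t < 0) := by
    by_contra hd
    push_neg at hd
    obtain ⟨⟨t₁, ht₁, h₁⟩, ⟨t₂, ht₂, h₂⟩⟩ := hd
    have h₁' : deriv z t₁ ≤ 0 := h₁
    have h₂' : 0 ≤ deriv z t₂ := h₂
    have h₁'' : deriv z t₁ < 0 := lt_of_le_of_ne h₁' (hcon t₁ ht₁)
    have h₂'' : 0 < deriv z t₂ := lt_of_le_of_ne h₂' (Ne.symm (hcon t₂ ht₂))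
    have hmem : (0 : ℝ) ∈ uIcc (deriv z t₁) (deriv z t₂) :=
      mem_uIcc.mpr (Or.inl ⟨h₁''.le, h₂''.le⟩)
    obtain ⟨c', hc'mem, hc'⟩ := intermediate_value_uIcc hz'.continuous.continuousOn hmem
    have hc'a : a < c' := by
      rcases mem_uIcc.mp hc'mem with ⟨hl, _⟩ | ⟨hl, _⟩
      · exact lt_of_lt_of_le ht₁ hl
      · exact lt_of_lt_of_le ht₂ hl
    exact hcon c' hc'a hc'
  rcases hdichot with hp | hneg
  · exact no_eventually_pos n hn m s hm hs z hz hz' hode B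
      (fun t => (abs_le.mp (hB t)).2) a hp
  · -- apply to -z
    have hderivneg : deriv (fun t => -z t) = fun t => -deriv z t := by
      funext t; exact deriv.neg
    have hzn : Differentiable ℝ (fun t => -z t) := hz.neg
    have hzn' : Differentiable ℝ (deriv (fun t => -z t)) := by
      rw [hderivneg]; exact hz'.neg
    have hoden : ∀ t, deriv (deriv (fun t => -z t)) t = sitF n m s ((fun t => -z t) t) := by
      intro t
      rw [hderivneg]
      have : deriv (fun t => -deriv z t) t = -deriv (deriv z) t := deriv.neg
      rw [this, hode t, ← sitF_odd]
    have hBn : ∀ t, (fun t => -z t) t ≤ B := fun t => by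
      have := (abs_le.mp (hB t)).1; simp only; linarith
    have hposn : ∀ t ∈ Ioi a, 0 < deriv (fun t => -z t) t := by
      intro t ht
      rw [hderivneg]
      simp only
      linarith [hneg t ht]
    exact no_eventually_pos n hn m s hm hs (fun t => -z t) hzn hzn' hoden B hBn a hposn
private lemma energy_conserved (n : ℕ) (m s : Fin n → ℝ) (hs : ∀ i, 0 < s i)
    (z : ℝ → ℝ) (hz : Differentiable ℝ z) (hz' : Differentiable ℝ (deriv z))
    (hode : ∀ t, deriv (deriv z) t = sitF n m s (z t)) :
    ∀ t : ℝ, (deriv z t) ^ 2 / 2 - ∑ i, m i * (s i ^ 2 + z t ^ 2) ^ (-(1 / 2) : ℝ)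
      = (deriv z 0) ^ 2 / 2 - ∑ i, m i * (s i ^ 2 + z 0 ^ 2) ^ (-(1 / 2) : ℝ) := by
  have hde : ∀ t : ℝ, HasDerivAt (fun t => (deriv z t) ^ 2 / 2
      - ∑ i, m i * (s i ^ 2 + z t ^ 2) ^ (-(1 / 2) : ℝ)) 0 t := by
    intro t
    have h1 : HasDerivAt (fun t => (deriv z t) ^ 2 / 2)
        (deriv z t * deriv (deriv z) t) t := by
      have := ((hz' t).hasDerivAt.pow 2).div_const 2
      refine this.congr_deriv ?_
      push_cast
      ring
    have hU : HasDerivAt (fun x : ℝ => ∑ i, m i * (s i ^ 2 + x ^ 2) ^ (-(1 / 2) : ℝ))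
        (∑ i, m i * ((-(1 / 2) : ℝ) * (s i ^ 2 + (z t) ^ 2) ^ ((-(1 / 2) : ℝ) - 1)
          * (2 * z t))) (z t) := by
      apply HasDerivAt.fun_sum
      intro i _
      exact (hasDerivAt_rpow_base (s i) (z t) (-(1 / 2) : ℝ) (hs i)).const_mul (m i)
    have h2 : HasDerivAt (fun t => ∑ i, m i * (s i ^ 2 + z t ^ 2) ^ (-(1 / 2) : ℝ))
        ((∑ i, m i * ((-(1 / 2) : ℝ) * (s i ^ 2 + (z t) ^ 2) ^ ((-(1 / 2) : ℝ) - 1)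
          * (2 * z t))) * deriv z t) t := by
      exact hU.comp t (hz t).hasDerivAt
    have hsum := h1.sub h2
    have hW : (∑ i, m i * ((-(1 / 2) : ℝ) * (s i ^ 2 + (z t) ^ 2) ^ ((-(1 / 2) : ℝ) - 1)
        * (2 * z t))) = sitF n m s (z t) := by
      simp only [sitF]
      rw [← Finset.sum_neg_distrib]
      apply Finset.sum_congr rfl
      intro i _
      have hpos : (0 : ℝ) < s i ^ 2 + (z t) ^ 2 := by
        nlinarith [pow_pos (hs i) 2, sq_nonneg (z t)]
      rw [show ((-(1 / 2) : ℝ) - 1) = -((3 : ℝ) / 2) by norm_num,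
        Real.rpow_neg hpos.le, div_eq_mul_inv]
      ring
    rw [hW, hode t] at hsum
    refine hsum.congr_deriv ?_
    ring
  intro t
  exact is_const_of_deriv_eq_zero (fun x => (hde x).differentiableAt)
    (fun x => (hde x).deriv) t 0

private lemma abs_le_of_energy (n : ℕ) (m s : Fin n → ℝ) (hm : ∀ i, 0 < m i)
    (x : ℝ) (E : ℝ) (hEneg : E < 0)
    (h : -E ≤ ∑ i, m i * (s i ^ 2 + x ^ 2) ^ (-(1 / 2) : ℝ)) :
    |x| ≤ (∑ i, m i) / (-E) := by
  rcases eq_or_ne x 0 with hx | hx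
  · rw [hx, abs_zero]
    exact div_nonneg (Finset.sum_nonneg fun i _ => (hm i).le) (by linarith)
  · have habs : 0 < |x| := abs_pos.mpr hx
    have hx2 : (0 : ℝ) < x ^ 2 := by nlinarith [sq_abs x]
    have hterm : ∀ i : Fin n, (s i ^ 2 + x ^ 2) ^ (-(1 / 2) : ℝ) ≤ |x|⁻¹ := by
      intro i
      have h1 : ((x ^ 2 : ℝ)) ^ (-(1 / 2) : ℝ) = |x|⁻¹ := by
        rw [← sq_abs, show ((|x| ^ 2 : ℝ)) = |x| ^ (2 : ℕ) from rfl,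
          ← Real.rpow_natCast |x| 2, ← Real.rpow_mul (abs_nonneg x)]
        rw [show ((2 : ℕ) : ℝ) * (-(1 / 2) : ℝ) = -1 by push_cast; ring, Real.rpow_neg_one]
      calc (s i ^ 2 + x ^ 2) ^ (-(1 / 2) : ℝ)
          ≤ ((x ^ 2 : ℝ)) ^ (-(1 / 2) : ℝ) :=
            Real.rpow_le_rpow_of_nonpos hx2 (by nlinarith [sq_nonneg (s i)]) (by norm_num)
        _ = |x|⁻¹ := h1
    have hsum : ∑ i, m i * (s i ^ 2 + x ^ 2) ^ (-(1 / 2) : ℝ) ≤ (∑ i, m i) * |x|⁻¹ := by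
      rw [Finset.sum_mul]
      exact Finset.sum_le_sum fun i _ => mul_le_mul_of_nonneg_left (hterm i) (hm i).le
    have hE' : (0 : ℝ) < -E := by linarith
    rw [le_div_iff₀ hE']
    have h3 : |x| * ((∑ i, m i) * |x|⁻¹) = ∑ i, m i := by field_simp
    have h4 := mul_le_mul_of_nonneg_left (h.trans hsum) (abs_nonneg x)
    calc |x| * -E ≤ |x| * ((∑ i, m i) * |x|⁻¹) := by nlinarith
      _ = ∑ i, m i := h3
/-- Solutions of the Sitnikov equation with energy strictly between
`E_min = −∑ m_i/s_i` and `0` are periodic. -/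
theorem sitnikov_negative_energy_periodic
    (n : ℕ) (hn : 1 ≤ n) (m s : Fin n → ℝ)
    (hm : ∀ i, 0 < m i) (hs : ∀ i, 0 < s i)
    (Emin : ℝ) (hEmin : Emin = -∑ i, m i / s i)
    (z : ℝ → ℝ) (hz : Differentiable ℝ z) (hz' : Differentiable ℝ (deriv z))
    (hode : ∀ t : ℝ, deriv (deriv z) t =
      -∑ i, m i * z t / (s i ^ 2 + z t ^ 2) ^ ((3 : ℝ) / 2))
    (E : ℝ)
    (hE : E = (deriv z 0) ^ 2 / 2
      - ∑ i, m i * (s i ^ 2 + z 0 ^ 2) ^ (-(1 / 2) : ℝ))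
    (hElow : Emin < E) (hEneg : E < 0) :
    ∃ T : ℝ, 0 < T ∧ ∀ t : ℝ, z (t + T) = z t := by
  have hodeF : ∀ t : ℝ, deriv (deriv z) t = sitF n m s (z t) := fun t => hode t
  have econs := energy_conserved n m s hs z hz hz' hodeF
  have hB : ∀ t : ℝ, |z t| ≤ (∑ i, m i) / (-E) := by
    intro t
    apply abs_le_of_energy n m s hm (z t) E hEneg
    have h1 := econs t
    rw [← hE] at h1
    nlinarith [sq_nonneg (deriv z t)]
  obtain ⟨t₀, ht₀, hdt₀⟩ := exists_deriv_zero n hn m s hm hs z hz hz' hodeF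
    ((∑ i, m i) / (-E)) hB 0
  obtain ⟨t₁, ht₁, hdt₁⟩ := exists_deriv_zero n hn m s hm hs z hz hz' hodeF
    ((∑ i, m i) / (-E)) hB t₀
  have refl₀ := sitnikov_reflect n m s hm hs z hz hz' hodeF t₀ hdt₀
  have refl₁ := sitnikov_reflect n m s hm hs z hz hz' hodeF t₁ hdt₁
  refine ⟨2 * (t₁ - t₀), by linarith, fun t => ?_⟩
  have e1 : t + 2 * (t₁ - t₀) = t₁ + (t₁ + t - 2 * t₀) := by ring
  rw [e1, refl₁]
  have e2 : t₁ - (t₁ + t - 2 * t₀) = t₀ + (t₀ - t) := by ring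
  rw [e2, refl₀]
  congr 1
  ring
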